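/- Let H be a 4-uniform hypergraph on a finite vertex set V with n = |V| ≥ 4 vertices, given by a finite nonempty family (e_i)_{i∈I} of 4-element subsets of V (repeats allowed). If H is 2-colorable, then its average degree d̄ = 4|I|/n satisfies d̄ ≤ −2·λ_min − ((n−1)/3)·λ^(2)_min, where λ_min is the smallest eigenvalue of the underlying graph adjacency matrix of H and λ^(2)_min is the smallest eigenvalue of the 2-subset graph adjacency matrix of H. -/

import Mathlib

open Finset

/-- The underlying graph adjacency matrix of a hypergraph given by the family of hyperedges
`e : I → Finset V`: the entry at `(u, v)` with `u ≠ v` is the number of hyperedges containing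
both `u` and `v`, and the diagonal is zero. -/
def underlyingAdj {V I : Type*} [Fintype I] [DecidableEq V] (e : I → Finset V) :
    Matrix V V ℝ := fun u v =>
  if u = v then 0 else ((Finset.univ.filter fun i => u ∈ e i ∧ v ∈ e i).card : ℝ)

lemma underlyingAdj_isHermitian {V I : Type*} [Fintype I] [DecidableEq V] (e : I → Finset V) :
    (underlyingAdj e).IsHermitian := by
  rw [Matrix.IsHermitian, Matrix.conjTranspose_eq_transpose_of_trivial]
  apply Matrix.IsSymm.ext
  intro i j
  simp only [underlyingAdj, eq_comm (a := j) (b := i)]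
  rcases eq_or_ne i j with h | h
  · simp [h]
  · simp only [if_neg h, if_neg h]
    congr 2
    apply Finset.filter_congr
    intro x _
    simp [and_comm]

/-- The 2-subset graph adjacency matrix of a hypergraph given by the family of hyperedges
`e : I → Finset V`: it is indexed by the 2-element subsets of `V`; the entry at `(S, T)` is the
number of hyperedges containing `S ∪ T` when `S` and `T` are disjoint, and `0` otherwise. -/
def twoSubsetAdj {V I : Type*} [Fintype V] [Fintype I] [DecidableEq V] (e : I → Finset V) :
    Matrix {S : Finset V // S.card = 2} {S : Finset V // S.card = 2} ℝ := fun S T =>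
  if Disjoint S.1 T.1 then ((Finset.univ.filter fun i => S.1 ∪ T.1 ⊆ e i).card : ℝ) else 0

lemma twoSubsetAdj_isHermitian {V I : Type*} [Fintype V] [Fintype I] [DecidableEq V]
    (e : I → Finset V) : (twoSubsetAdj e).IsHermitian := by
  rw [Matrix.IsHermitian, Matrix.conjTranspose_eq_transpose_of_trivial]
  apply Matrix.IsSymm.ext
  intro S T
  simp only [twoSubsetAdj, disjoint_comm, Finset.union_comm]


open Matrix in
lemma rayleigh_min' {n : Type*} [Fintype n] [DecidableEq n] [Nonempty n] {A : Matrix n n ℝ}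
    (hA : A.IsHermitian) (x : n → ℝ) :
    (⨅ i, hA.eigenvalues i) * (dotProduct x x) ≤ dotProduct x (A.mulVec x) := by
  set U : Matrix n n ℝ := (hA.eigenvectorUnitary : Matrix n n ℝ) with hU
  set y : n → ℝ := star U *ᵥ x with hy
  have hUU : U * star U = 1 := Unitary.mul_star_self_of_mem hA.eigenvectorUnitary.2
  have hsU : star U = Uᵀ := by
    rw [← Matrix.conjTranspose_eq_transpose_of_trivial]; rfl
  have hquad : dotProduct x (A.mulVec x) = ∑ i, hA.eigenvalues i * (y i * y i) := by
    conv_lhs => rw [hA.spectral_theorem, Unitary.conjStarAlgAut_apply, ← Matrix.mulVec_mulVec, ← Matrix.mulVec_mulVec,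
      Matrix.dotProduct_mulVec, ← Matrix.mulVec_transpose, ← hsU, ← hy]
    simp [dotProduct, Matrix.mulVec_diagonal, RCLike.ofReal_real_eq_id]
    exact Finset.sum_congr rfl fun i _ => by ring
  have hnorm : dotProduct x x = ∑ i, y i * y i := by
    have h0 : (∑ i, y i * y i) = dotProduct y y := rfl
    rw [h0, hy, Matrix.dotProduct_mulVec, Matrix.vecMul_mulVec]
    rw [show (star U)ᵀ = U from by rw [hsU, Matrix.transpose_transpose]]
    rw [hUU, Matrix.vecMul_one]
  rw [hquad, hnorm, Finset.mul_sum]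
  apply Finset.sum_le_sum
  intro i _
  have h1 : (⨅ j, hA.eigenvalues j) ≤ hA.eigenvalues i := ciInf_le (Finite.bddBelow_range _) i
  nlinarith [mul_self_nonneg (y i)]

lemma edge_key' {V : Type*} [DecidableEq V] (g : V → Bool) (x : V → ℝ)
    (hxg : ∀ v, x v = if g v then (1:ℝ) else -1) (s : Finset V)
    (hs : s.card = 4) (hmono : ∃ u ∈ s, ∃ v ∈ s, g u ≠ g v) :
    -2 * ((∑ v ∈ s, x v)^2 - 4) - (2/3) * (6 * ∏ v ∈ s, x v) = 4 := by
  simp only [hxg]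
  set a := (s.filter fun v => g v).card with ha'
  set b := (s.filter fun v => ¬ g v).card with hb'
  have hab : a + b = 4 := by
    rw [ha', hb', Finset.card_filter_add_card_filter_not, hs]
  have hsum : (∑ v ∈ s, (if g v then (1:ℝ) else -1)) = (a : ℝ) - b := by
    rw [Finset.sum_ite, Finset.sum_const, Finset.sum_const, ← ha', ← hb']
    simp [sub_eq_add_neg]
  have hprod : (∏ v ∈ s, (if g v then (1:ℝ) else -1)) = (-1 : ℝ)^b := by
    rw [Finset.prod_ite, Finset.prod_const_one, Finset.prod_const, ← hb', one_mul]
  have hex : (∃ w ∈ s, g w = true) ∧ (∃ w ∈ s, g w = false) := by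
    obtain ⟨u, hu, v, hv, huv⟩ := hmono
    cases hgu : g u <;> cases hgv : g v <;> simp [hgu, hgv] at huv ⊢
    · exact ⟨⟨v, hv, hgv⟩, ⟨u, hu, hgu⟩⟩
    · exact ⟨⟨u, hu, hgu⟩, ⟨v, hv, hgv⟩⟩
  have ha1 : 1 ≤ a := by
    obtain ⟨w, hw, hw'⟩ := hex.1
    exact Finset.card_pos.2 ⟨w, Finset.mem_filter.2 ⟨hw, hw'⟩⟩
  have hb1 : 1 ≤ b := by
    obtain ⟨w, hw, hw'⟩ := hex.2
    exact Finset.card_pos.2 ⟨w, Finset.mem_filter.2 ⟨hw, by simp [hw']⟩⟩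
  rw [hsum, hprod]
  have : (a = 1 ∧ b = 3) ∨ (a = 2 ∧ b = 2) ∨ (a = 3 ∧ b = 1) := by omega
  rcases this with ⟨h1, h2⟩ | ⟨h1, h2⟩ | ⟨h1, h2⟩ <;> rw [h1, h2] <;> norm_num

lemma Q1_eq' {V I : Type*} [Fintype V] [Fintype I] [DecidableEq V] (e : I → Finset V)
    (he : ∀ i, (e i).card = 4) (x : V → ℝ) (hx : ∀ v, x v * x v = 1) :
    dotProduct x ((underlyingAdj e).mulVec x) = ∑ i, ((∑ v ∈ e i, x v)^2 - 4) := by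
  have h1 : ∀ u v : V, x u * (underlyingAdj e u v * x v)
      = ∑ i, if u ∈ e i ∧ v ∈ e i ∧ u ≠ v then x u * x v else 0 := by
    intro u v
    rcases eq_or_ne u v with h | h
    · simp [underlyingAdj, h]
    · rw [underlyingAdj, if_neg h, Finset.card_filter]
      push_cast
      rw [Finset.sum_mul, Finset.mul_sum]
      refine Finset.sum_congr rfl fun i _ => ?_
      by_cases hc : u ∈ e i ∧ v ∈ e i
      · rw [if_pos hc, if_pos ⟨hc.1, hc.2, h⟩]; ring
      · rw [if_neg hc, if_neg fun hc' => hc ⟨hc'.1, hc'.2.1⟩]; ring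
  calc dotProduct x ((underlyingAdj e).mulVec x)
      = ∑ u, ∑ v, x u * (underlyingAdj e u v * x v) := by
        simp [dotProduct, Matrix.mulVec, Finset.mul_sum]
    _ = ∑ u, ∑ v, ∑ i, if u ∈ e i ∧ v ∈ e i ∧ u ≠ v then x u * x v else 0 := by
        exact Finset.sum_congr rfl fun u _ => Finset.sum_congr rfl fun v _ => h1 u v
    _ = ∑ u, ∑ i, ∑ v, (if u ∈ e i ∧ v ∈ e i ∧ u ≠ v then x u * x v else 0) :=
        Finset.sum_congr rfl fun u _ => Finset.sum_comm
    _ = ∑ i, ∑ u, ∑ v, (if u ∈ e i ∧ v ∈ e i ∧ u ≠ v then x u * x v else 0) :=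
        Finset.sum_comm
    _ = ∑ i, ((∑ v ∈ e i, x v)^2 - 4) := by
        refine Finset.sum_congr rfl fun i _ => ?_
        have hterm : ∀ u v : V, (if u ∈ e i ∧ v ∈ e i ∧ u ≠ v then x u * x v else 0)
            = (if u ∈ e i then x u else 0) * (if v ∈ e i then x v else 0)
              - (if u = v ∧ v ∈ e i then 1 else 0) := by
          intro u v
          by_cases h1' : u ∈ e i <;> by_cases h2 : v ∈ e i <;> by_cases h3 : u = v <;>
            simp [h1', h2, h3] <;> subst h3 <;> simp_all [hx u]
        calc ∑ u, ∑ v, (if u ∈ e i ∧ v ∈ e i ∧ u ≠ v then x u * x v else 0)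
            = ∑ u, ∑ v, ((if u ∈ e i then x u else 0) * (if v ∈ e i then x v else 0)
              - (if u = v ∧ v ∈ e i then 1 else 0)) := by
              exact Finset.sum_congr rfl fun u _ => Finset.sum_congr rfl fun v _ => hterm u v
          _ = (∑ u, if u ∈ e i then x u else 0) * (∑ v, if v ∈ e i then x v else 0)
              - ∑ v, (if v ∈ e i then (1:ℝ) else 0) := by
              rw [Finset.sum_mul_sum, ← Finset.sum_sub_distrib]
              refine Finset.sum_congr rfl fun u _ => ?_
              rw [Finset.sum_sub_distrib]
              congr 1
              simp [ite_and, Finset.sum_ite_eq]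
          _ = (∑ v ∈ e i, x v)^2 - 4 := by
              rw [Finset.sum_ite_mem, Finset.sum_ite_mem, Finset.sum_const,
                Finset.univ_inter, sq, he i]
              norm_num

lemma Q2_eq' {V I : Type*} [Fintype V] [Fintype I] [DecidableEq V] (e : I → Finset V)
    (he : ∀ i, (e i).card = 4) (x : V → ℝ) :
    dotProduct (fun S : {S : Finset V // S.card = 2} => ∏ v ∈ S.1, x v)
      ((twoSubsetAdj e).mulVec (fun S => ∏ v ∈ S.1, x v)) = ∑ i, 6 * ∏ v ∈ e i, x v := by
  set y : {S : Finset V // S.card = 2} → ℝ := fun S => ∏ v ∈ S.1, x v with hy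
  have h1 : ∀ S T : {S : Finset V // S.card = 2}, y S * (twoSubsetAdj e S T * y T)
      = ∑ i, if Disjoint S.1 T.1 ∧ S.1 ∪ T.1 ⊆ e i then y S * y T else 0 := by
    intro S T
    rw [twoSubsetAdj]
    by_cases h : Disjoint S.1 T.1
    · rw [if_pos h, Finset.card_filter]
      push_cast
      rw [Finset.sum_mul, Finset.mul_sum]
      refine Finset.sum_congr rfl fun i _ => ?_
      by_cases hc : S.1 ∪ T.1 ⊆ e i
      · rw [if_pos hc, if_pos ⟨h, hc⟩]; ring
      · rw [if_neg hc, if_neg fun hc' => hc hc'.2]; ring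
    · rw [if_neg h]
      simp only [zero_mul, mul_zero]
      exact (Finset.sum_eq_zero fun i _ => if_neg fun hc => h hc.1).symm
  have key : ∀ i, ∀ S T : {S : Finset V // S.card = 2},
      (if Disjoint S.1 T.1 ∧ S.1 ∪ T.1 ⊆ e i then y S * y T else 0)
      = (if S.1 ⊆ e i ∧ T.1 = e i \ S.1 then (∏ v ∈ e i, x v) else 0) := by
    intro i S T
    by_cases h : Disjoint S.1 T.1 ∧ S.1 ∪ T.1 ⊆ e i
    · rw [if_pos h]
      have hcard : (S.1 ∪ T.1).card = 4 := by
        rw [Finset.card_union_of_disjoint h.1, S.2, T.2]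
      have hunion : S.1 ∪ T.1 = e i :=
        Finset.eq_of_subset_of_card_le h.2 (by rw [hcard, he i])
      have hs : S.1 ⊆ e i := hunion ▸ Finset.subset_union_left
      have ht : T.1 = e i \ S.1 := by
        rw [← hunion, Finset.union_sdiff_cancel_left h.1]
      rw [if_pos ⟨hs, ht⟩, hy]
      dsimp only
      rw [← Finset.prod_union h.1, hunion]
    · rw [if_neg h, if_neg]
      rintro ⟨h1', h2⟩
      refine h ⟨?_, ?_⟩
      · rw [h2]; exact Finset.disjoint_sdiff
      · rw [h2, Finset.union_sdiff_of_subset h1']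
  have inner : ∀ i, ∀ S : {S : Finset V // S.card = 2},
      (∑ T : {S : Finset V // S.card = 2}, if S.1 ⊆ e i ∧ T.1 = e i \ S.1
        then (∏ v ∈ e i, x v) else 0)
      = if S.1 ⊆ e i then (∏ v ∈ e i, x v) else 0 := by
    intro i S
    by_cases hS : S.1 ⊆ e i
    · simp only [hS, true_and, if_true]
      have hD : (e i \ S.1).card = 2 := by
        rw [Finset.card_sdiff_of_subset hS, he i, S.2]
      rw [Finset.sum_eq_single (⟨e i \ S.1, hD⟩ : {S : Finset V // S.card = 2})]
      · rw [if_pos rfl]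
      · intro T _ hT
        rw [if_neg fun h => hT (Subtype.ext h)]
      · intro h; exact absurd (Finset.mem_univ _) h
    · simp [hS]
  have hcard6 : ∀ i, (Finset.univ.filter
      fun S : {S : Finset V // S.card = 2} => S.1 ⊆ e i).card = 6 := by
    intro i
    have : (Finset.univ.filter fun S : {S : Finset V // S.card = 2} => S.1 ⊆ e i).card
        = ((e i).powersetCard 2).card := by
      apply Finset.card_bij (fun S _ => S.1)
      · intro S hS
        rw [Finset.mem_powersetCard]
        exact ⟨(Finset.mem_filter.1 hS).2, S.2⟩
      · intro S _ T _ h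
        exact Subtype.ext h
      · intro T hT
        rw [Finset.mem_powersetCard] at hT
        exact ⟨⟨T, hT.2⟩, Finset.mem_filter.2 ⟨Finset.mem_univ _, hT.1⟩, rfl⟩
    rw [this, Finset.card_powersetCard, he i]
    decide
  calc dotProduct y ((twoSubsetAdj e).mulVec y)
      = ∑ S, ∑ T, y S * (twoSubsetAdj e S T * y T) := by
        simp [dotProduct, Matrix.mulVec, Finset.mul_sum]
    _ = ∑ S, ∑ T, ∑ i, if Disjoint S.1 T.1 ∧ S.1 ∪ T.1 ⊆ e i then y S * y T else 0 :=
        Finset.sum_congr rfl fun S _ => Finset.sum_congr rfl fun T _ => h1 S T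
    _ = ∑ S, ∑ i, ∑ T, (if Disjoint S.1 T.1 ∧ S.1 ∪ T.1 ⊆ e i then y S * y T else 0) :=
        Finset.sum_congr rfl fun S _ => Finset.sum_comm
    _ = ∑ i, ∑ S, ∑ T, (if Disjoint S.1 T.1 ∧ S.1 ∪ T.1 ⊆ e i then y S * y T else 0) :=
        Finset.sum_comm
    _ = ∑ i, 6 * ∏ v ∈ e i, x v := by
        refine Finset.sum_congr rfl fun i _ => ?_
        calc ∑ S, ∑ T, (if Disjoint S.1 T.1 ∧ S.1 ∪ T.1 ⊆ e i then y S * y T else 0)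
            = ∑ S : {S : Finset V // S.card = 2},
                (if S.1 ⊆ e i then (∏ v ∈ e i, x v) else 0) := by
              refine Finset.sum_congr rfl fun S _ => ?_
              rw [Finset.sum_congr rfl fun T _ => key i S T, inner i S]
          _ = 6 * ∏ v ∈ e i, x v := by
              rw [Finset.sum_ite, Finset.sum_const_zero, add_zero, Finset.sum_const,
                hcard6 i, nsmul_eq_mul]
              norm_num

/-- If a 4-uniform hypergraph `H` on a finite vertex set with `n = |V| ≥ 4` vertices, given by a
nonempty family `(e i)_{i : I}` of 4-element subsets, is 2-colorable, then its average degree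
`d̄ = 4|I|/n` satisfies `d̄ ≤ -2·λ_min - ((n-1)/3)·λ⁽²⁾_min`, where `λ_min` and `λ⁽²⁾_min` are
the smallest eigenvalues of the underlying graph and the 2-subset graph adjacency matrices. -/

theorem fourUniform_two_colorable {V I : Type*} [Fintype V] [DecidableEq V]
    [Fintype I] [Nonempty I] (hn : 4 ≤ Fintype.card V)
    (e : I → Finset V) (he : ∀ i, (e i).card = 4)
    (hcol : ∃ g : V → Bool, ∀ i, ∃ u ∈ e i, ∃ v ∈ e i, g u ≠ g v) :
    (4 * Fintype.card I : ℝ) / (Fintype.card V : ℝ) ≤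
      -2 * (⨅ v, (underlyingAdj_isHermitian e).eigenvalues v) -
        ((Fintype.card V : ℝ) - 1) / 3 * ⨅ S, (twoSubsetAdj_isHermitian e).eigenvalues S := by
  obtain ⟨g, hg⟩ := hcol
  set x : V → ℝ := fun v => if g v then 1 else -1 with hxdef
  have hxg : ∀ v, x v = if g v then (1:ℝ) else -1 := fun v => rfl
  have hx1 : ∀ v, x v * x v = 1 := by
    intro v; by_cases h : g v <;> simp [hxg v, h]
  haveI : Nonempty V := Fintype.card_pos_iff.1 (by omega)
  have hcard2 : Fintype.card {S : Finset V // S.card = 2} = (Fintype.card V).choose 2 :=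
    Fintype.card_finset_len 2
  haveI : Nonempty {S : Finset V // S.card = 2} := by
    apply Fintype.card_pos_iff.1
    rw [hcard2]
    exact Nat.choose_pos (by omega)
  have hxx : dotProduct x x = (Fintype.card V : ℝ) := by
    simp [dotProduct, hx1, Finset.card_univ]
  have hyy : dotProduct (fun S : {S : Finset V // S.card = 2} => ∏ v ∈ S.1, x v)
      (fun S => ∏ v ∈ S.1, x v) = (Fintype.card {S : Finset V // S.card = 2} : ℝ) := by
    have h1 : ∀ S : {S : Finset V // S.card = 2},
        (∏ v ∈ S.1, x v) * (∏ v ∈ S.1, x v) = 1 := by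
      intro S
      rw [← Finset.prod_mul_distrib]
      simp [hx1]
    simp [dotProduct, h1, Finset.card_univ]
  have r1 := rayleigh_min' (underlyingAdj_isHermitian e) x
  rw [hxx, Q1_eq' e he x hx1] at r1
  have r2 := rayleigh_min' (twoSubsetAdj_isHermitian e) (fun S => ∏ v ∈ S.1, x v)
  rw [hyy, Q2_eq' e he x] at r2
  have hkey : -2 * (∑ i, ((∑ v ∈ e i, x v)^2 - 4))
      - (2/3) * (∑ i, 6 * ∏ v ∈ e i, x v) = 4 * (Fintype.card I : ℝ) := by
    rw [Finset.mul_sum, Finset.mul_sum, ← Finset.sum_sub_distrib,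
      Finset.sum_congr rfl fun i _ => edge_key' g x hxg (e i) (he i) (hg i),
      Finset.sum_const, Finset.card_univ, nsmul_eq_mul]
    ring
  have h1V : (1:ℕ) ≤ Fintype.card V := by omega
  have hnat : 2 * Fintype.card {S : Finset V // S.card = 2}
      = Fintype.card V * (Fintype.card V - 1) := by
    rw [hcard2, Nat.choose_two_right]
    refine Nat.mul_div_cancel' ?_
    rcases Nat.even_or_odd (Fintype.card V) with h | h
    · exact Dvd.dvd.mul_right h.two_dvd _
    · exact Dvd.dvd.mul_left (Nat.Odd.sub_odd h odd_one).two_dvd _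
  have h2K : 2 * (Fintype.card {S : Finset V // S.card = 2} : ℝ)
      = (Fintype.card V : ℝ) * ((Fintype.card V : ℝ) - 1) := by
    calc 2 * (Fintype.card {S : Finset V // S.card = 2} : ℝ)
        = ((2 * Fintype.card {S : Finset V // S.card = 2} : ℕ) : ℝ) := by push_cast; ring
      _ = ((Fintype.card V * (Fintype.card V - 1) : ℕ) : ℝ) := by rw [hnat]
      _ = (Fintype.card V : ℝ) * ((Fintype.card V : ℝ) - 1) := by
          rw [Nat.cast_mul, Nat.cast_sub h1V, Nat.cast_one]
  set L1 := ⨅ v, (underlyingAdj_isHermitian e).eigenvalues v with hL1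
  set L2 := ⨅ S, (twoSubsetAdj_isHermitian e).eigenvalues S with hL2
  have hn1 : (0:ℝ) < (Fintype.card V : ℝ) := by
    have : 0 < Fintype.card V := by omega
    exact_mod_cast this
  rw [div_le_iff₀ hn1]
  have r2' : (2/3 : ℝ) * (L2 * (Fintype.card {S : Finset V // S.card = 2} : ℝ))
      ≤ (2/3) * (∑ i, 6 * ∏ v ∈ e i, x v) := by linarith
  have h5 : (2/3 : ℝ) * (L2 * (Fintype.card {S : Finset V // S.card = 2} : ℝ))
      = ((Fintype.card V : ℝ) - 1)/3 * L2 * (Fintype.card V : ℝ) := by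
    linear_combination (L2/3) * h2K
  nlinarith [r1, r2', h5, hkey]
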